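/- For nonnegative integers i ≥ j and integer r ≥ 1, the r-Stirling numbers of the first kind satisfy the recurrence [i+r, j+r]_r = Σ_{k=j}^{i} C(k,j) [i+r-1, k+r-1]_{r-1}, where [n,m]_r denotes the (unsigned) r-Stirling number of the first kind. -/
import Mathlib


open Finset

/-- The unsigned `r`-Stirling numbers of the first kind: `rS1 r i j = [i+r, j+r]_r`,
characterized by `∑_j [i+r, j+r]_r x^j = (x+r)(x+r+1)⋯(x+r+i-1)`. -/
def rS1 (r : ℕ) : ℕ → ℕ → ℕ
  | 0, 0 => 1
  | 0, _ + 1 => 0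
  | i + 1, 0 => (r + i) * rS1 r i 0
  | i + 1, j + 1 => (r + i) * rS1 r i (j + 1) + rS1 r i j

lemma rS1_eq_zero (r : ℕ) : ∀ i k, i < k → rS1 r i k = 0 := by
  intro i
  induction i with
  | zero =>
    intro k hk
    match k, hk with
    | k + 1, _ => rfl
  | succ i ih =>
    intro k hk
    match k, hk with
    | k + 1, hk =>
      show (r + i) * rS1 r i (k + 1) + rS1 r i k = 0
      rw [ih (k + 1) (by omega), ih k (by omega)]
      ring

lemma sum_shift (f : ℕ → ℕ) (n : ℕ) (h0 : f 0 = 0) (hn : f (n + 1) = 0) :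
    ∑ k ∈ range (n + 1), f (k + 1) = ∑ k ∈ range (n + 1), f k := by
  have h1 := Finset.sum_range_succ' f (n + 1)
  have h2 := Finset.sum_range_succ f (n + 1)
  omega

lemma rS1_aux (s : ℕ) :
    ∀ i j, rS1 (s + 1) i j = ∑ k ∈ range (i + 1), k.choose j * rS1 s i k := by
  intro i
  induction i with
  | zero =>
    intro j
    cases j with
    | zero => simp [rS1]
    | succ j => simp [rS1]
  | succ i ih =>
    intro j
    have hrec : ∀ k, rS1 s (i + 1) (k + 1) = (s + i) * rS1 s i (k + 1) + rS1 s i k :=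
      fun k => rfl
    have hrec0 : rS1 s (i + 1) 0 = (s + i) * rS1 s i 0 := rfl
    cases j with
    | zero =>
      have hL : rS1 (s + 1) (i + 1) 0 = (s + 1 + i) * rS1 (s + 1) i 0 := rfl
      rw [hL, ih 0]
      simp only [Nat.choose_zero_right, one_mul]
      rw [Finset.sum_range_succ' (fun k => rS1 s (i + 1) k) (i + 1), hrec0]
      simp only [hrec]
      rw [Finset.sum_add_distrib, ← Finset.mul_sum]
      have hT : (∑ k ∈ range (i + 1), rS1 s i (k + 1)) + rS1 s i 0
          = ∑ k ∈ range (i + 1), rS1 s i k := by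
        have h1 := Finset.sum_range_succ' (fun k => rS1 s i k) (i + 1)
        have h2 := Finset.sum_range_succ (fun k => rS1 s i k) (i + 1)
        rw [rS1_eq_zero s i (i + 1) (by omega)] at h2
        omega
      rw [← hT]
      ring
    | succ j =>
      have hL : rS1 (s + 1) (i + 1) (j + 1)
          = (s + 1 + i) * rS1 (s + 1) i (j + 1) + rS1 (s + 1) i j := rfl
      rw [hL, ih (j + 1), ih j]
      rw [Finset.sum_range_succ' (fun k => k.choose (j + 1) * rS1 s (i + 1) k) (i + 1)]
      have hterm : ∀ k, (k + 1).choose (j + 1) * rS1 s (i + 1) (k + 1)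
          = (s + i) * ((k + 1).choose (j + 1) * rS1 s i (k + 1))
            + (k.choose j * rS1 s i k + k.choose (j + 1) * rS1 s i k) := by
        intro k
        rw [hrec k, Nat.choose_succ_succ]
        ring
      rw [Finset.sum_congr rfl (fun k _ => hterm k)]
      rw [Finset.sum_add_distrib, Finset.sum_add_distrib, ← Finset.mul_sum]
      have hshift : ∑ k ∈ range (i + 1), (k + 1).choose (j + 1) * rS1 s i (k + 1)
          = ∑ k ∈ range (i + 1), k.choose (j + 1) * rS1 s i k := by
        apply sum_shift (fun k => k.choose (j + 1) * rS1 s i k) i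
        · simp
        · rw [rS1_eq_zero s i (i + 1) (by omega)]
          ring
      rw [hshift, Nat.choose_zero_succ]
      ring

theorem rStirlingFirst_recurrence (i j r : ℕ) (hr : 1 ≤ r) (hij : j ≤ i) :
    rS1 r i j = ∑ k ∈ Finset.Icc j i, k.choose j * rS1 (r - 1) i k := by
  obtain ⟨s, rfl⟩ : ∃ s, r = s + 1 := ⟨r - 1, by omega⟩
  simp only [Nat.add_sub_cancel]
  rw [rS1_aux s i j]
  symm
  apply Finset.sum_subset
  · intro x hx
    simp only [Finset.mem_Icc, Finset.mem_range] at *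
    omega
  · intro x hx hnx
    simp only [Finset.mem_Icc, Finset.mem_range] at *
    have : x < j := by omega
    rw [Nat.choose_eq_zero_of_lt this, zero_mul]
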